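/- Let S be an ordered multiset of n integers taking exactly c distinct values, where n = k·c + 1 for a positive integer k and c is a perfect square. Then S contains a monotonic subsequence of length at least √c + n/c − 2. -/

import Mathlib

theorem multiset_monotone_subseq (n c d k : ℕ) (hk : 1 ≤ k) (hc : c = d ^ 2)
    (hn : n = k * c + 1) (a : Fin n → ℤ)
    (hcard : (Finset.univ.image a).card = c) :
    ∃ (m : ℕ) (σ : Fin m → Fin n), StrictMono σ ∧
      (Monotone (a ∘ σ) ∨ Antitone (a ∘ σ)) ∧
      (m : ℝ) ≥ Real.sqrt c + (n : ℝ) / c - 2 := by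
  classical
  -- chain machinery
  set chainSets : (Fin n → ℤ) → Fin n → Finset (Finset (Fin n)) :=
    fun b i => Finset.univ.filter
      (fun s => i ∈ s ∧ (∀ p ∈ s, p ≤ i) ∧ ∀ p ∈ s, ∀ q ∈ s, p < q → b p ≤ b q) with hCS
  have mem_chainSets : ∀ (b : Fin n → ℤ) (i : Fin n) (s : Finset (Fin n)),
      s ∈ chainSets b i ↔
      i ∈ s ∧ (∀ p ∈ s, p ≤ i) ∧ ∀ p ∈ s, ∀ q ∈ s, p < q → b p ≤ b q := by
    intro b i s; simp [hCS]
  set clen : (Fin n → ℤ) → Fin n → ℕ := fun b i => (chainSets b i).sup Finset.card with hCL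
  have singleton_mem : ∀ (b : Fin n → ℤ) (i : Fin n), {i} ∈ chainSets b i := by
    intro b i
    rw [mem_chainSets]
    refine ⟨Finset.mem_singleton_self i, ?_, ?_⟩
    · intro p hp; rw [Finset.mem_singleton] at hp; exact le_of_eq hp
    · intro p hp q hq hpq
      rw [Finset.mem_singleton] at hp hq
      rw [hp, hq] at hpq
      exact absurd hpq (lt_irrefl i)
  have clen_ge_one : ∀ (b : Fin n → ℤ) (i : Fin n), 1 ≤ clen b i := by
    intro b i
    have h := Finset.le_sup (f := Finset.card) (singleton_mem b i)
    rw [Finset.card_singleton] at h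
    exact h
  have exists_chain : ∀ (b : Fin n → ℤ) (i : Fin n),
      ∃ s ∈ chainSets b i, clen b i = s.card := by
    intro b i
    exact Finset.exists_mem_eq_sup _ ⟨{i}, singleton_mem b i⟩ Finset.card
  have clen_lt : ∀ (b : Fin n → ℤ) (i j : Fin n), i < j → b i ≤ b j →
      clen b i < clen b j := by
    intro b i j hij hb
    obtain ⟨s, hs, hsc⟩ := exists_chain b i
    rw [mem_chainSets] at hs
    obtain ⟨his, hle, hmono⟩ := hs
    have hjs : j ∉ s := fun hj => absurd (hle j hj) (not_le.mpr hij)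
    have hins : insert j s ∈ chainSets b j := by
      rw [mem_chainSets]
      refine ⟨Finset.mem_insert_self _ _, ?_, ?_⟩
      · intro p hp
        rcases Finset.mem_insert.mp hp with h | h
        · exact le_of_eq h
        · exact le_of_lt (lt_of_le_of_lt (hle p h) hij)
      · intro p hp q hq hpq
        rcases Finset.mem_insert.mp hp with h | h
        · rcases Finset.mem_insert.mp hq with h' | h'
          · rw [h, h'] at hpq
            exact absurd hpq (lt_irrefl _)
          · exact absurd (lt_of_lt_of_le (h ▸ hpq) (hle q h')) (not_lt.mpr (le_of_lt hij))
        · rcases Finset.mem_insert.mp hq with h' | h'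
          · subst h'
            rcases eq_or_lt_of_le (hle p h) with h'' | h''
            · exact h'' ▸ hb
            · exact le_trans (hmono p h i his h'') hb
          · exact hmono p h q h' hpq
    calc clen b i < s.card + 1 := by omega
    _ = (insert j s).card := (Finset.card_insert_of_notMem hjs).symm
    _ ≤ clen b j := Finset.le_sup (f := Finset.card) hins
  set occ : Fin n → ℕ :=
    fun i => (Finset.univ.filter (fun p => p ≤ i ∧ a p = a i)).card with hOC
  have occ_ge_one : ∀ i, 1 ≤ occ i := by
    intro i
    have : i ∈ Finset.univ.filter (fun p => p ≤ i ∧ a p = a i) := by simp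
    exact Finset.card_pos.mpr ⟨i, this⟩
  have occ_lt : ∀ i j : Fin n, i < j → a i = a j → occ i < occ j := by
    intro i j hij hab
    apply Finset.card_lt_card
    constructor
    · intro p hp
      simp only [Finset.mem_filter, Finset.mem_univ, true_and] at hp ⊢
      exact ⟨le_trans hp.1 (le_of_lt hij), hp.2.trans hab⟩
    · intro hsub
      have : j ∈ Finset.univ.filter (fun p => p ≤ j ∧ a p = a j) := by simp
      have := hsub this
      simp only [Finset.mem_filter, Finset.mem_univ, true_and] at this
      exact absurd this.1 (not_le.mpr hij)
  have occ_le_clen : ∀ (b : Fin n → ℤ), (∀ p q, a p = a q → b p = b q) →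
      ∀ i, occ i ≤ clen b i := by
    intro b hb i
    have hmem : Finset.univ.filter (fun p => p ≤ i ∧ a p = a i) ∈ chainSets b i := by
      rw [mem_chainSets]
      refine ⟨by simp, ?_, ?_⟩
      · intro p hp; simp only [Finset.mem_filter] at hp; exact hp.2.1
      · intro p hp q hq _
        simp only [Finset.mem_filter] at hp hq
        exact le_of_eq (hb p q (hp.2.2.trans hq.2.2.symm))
    exact Finset.le_sup (f := Finset.card) hmem
  -- x, y
  set x : Fin n → ℕ := clen a with hX
  set y : Fin n → ℕ := clen (fun i => -a i) with hY
  have pair_lt : ∀ i j : Fin n, i < j → x i < x j ∨ y i < y j := by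
    intro i j hij
    rcases le_total (a i) (a j) with h | h
    · exact Or.inl (clen_lt a i j hij h)
    · exact Or.inr (clen_lt _ i j hij (neg_le_neg h))
  have hinj : ∀ i j : Fin n, x i = x j → y i = y j → i = j := by
    intro i j hx hy
    rcases lt_trichotomy i j with h | h | h
    · rcases pair_lt i j h with h' | h' <;> omega
    · exact h
    · rcases pair_lt j i h with h' | h' <;> omega
  have hn1 : 0 < n := by omega
  have hc1 : 1 ≤ c := by
    rw [← hcard]
    exact Finset.card_pos.mpr
      ⟨a ⟨0, hn1⟩, Finset.mem_image_of_mem a (Finset.mem_univ _)⟩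
  have hd1 : 1 ≤ d := by
    rcases Nat.eq_zero_or_pos d with h | h
    · subst h; simp at hc; omega
    · exact h
  set L : ℕ := Finset.univ.sup (fun i : Fin n => max (x i) (y i)) with hL
  have hxL : ∀ i, x i ≤ L := fun i => le_trans (le_max_left (x i) (y i))
    (Finset.le_sup (f := fun i : Fin n => max (x i) (y i)) (Finset.mem_univ i))
  have hyL : ∀ i, y i ≤ L := fun i => le_trans (le_max_right (x i) (y i))
    (Finset.le_sup (f := fun i : Fin n => max (x i) (y i)) (Finset.mem_univ i))
  -- Step B : d ≤ L
  have hdL : d ≤ L := by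
    by_contra hcon
    push_neg at hcon
    have hcount : n ≤ L * L := by
      have := Finset.card_le_card_of_injOn (s := (Finset.univ : Finset (Fin n)))
        (f := fun i : Fin n => (x i, y i))
        (t := Finset.Icc 1 L ×ˢ Finset.Icc 1 L)
        (fun i _ => by
          simp only [Finset.mem_coe, Finset.mem_product, Finset.mem_Icc]
          exact ⟨⟨clen_ge_one a i, hxL i⟩, ⟨clen_ge_one _ i, hyL i⟩⟩)
        (fun i _ j _ hij => hinj i j (congrArg Prod.fst hij) (congrArg Prod.snd hij))
      have hp : (Finset.Icc 1 L ×ˢ Finset.Icc 1 L).card = L * L := by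
        rw [Finset.card_product, Nat.card_Icc]
        congr 1 <;> omega
      rw [hp] at this
      simpa using this
    obtain ⟨e, rfl⟩ : ∃ e, d = e + 1 := ⟨d - 1, by omega⟩
    have hLe : L ≤ e := by omega
    have : L * L ≤ e * e := Nat.mul_le_mul hLe hLe
    have hcd : k * c ≥ c := Nat.le_mul_of_pos_left c hk
    nlinarith [hcount, hn, hc]
  -- Step C : d + k ≤ L
  have hdkL : d + k ≤ L := by
    have hS1 : (Finset.univ.filter (fun i : Fin n => occ i ≤ L - d)).card ≤ c * (L - d) := by
      have := Finset.card_le_card_of_injOn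
        (s := Finset.univ.filter (fun i : Fin n => occ i ≤ L - d))
        (f := fun i : Fin n => (a i, occ i))
        (t := (Finset.univ.image a) ×ˢ Finset.Icc 1 (L - d))
        (fun i hi => by
          simp only [Finset.mem_coe, Finset.mem_filter, Finset.mem_univ, true_and] at hi
          simp only [Finset.mem_coe, Finset.mem_product, Finset.mem_Icc]
          exact ⟨Finset.mem_image_of_mem a (Finset.mem_univ i), occ_ge_one i, hi⟩)
        (fun i _ j _ hij => by
          have h1 := congrArg Prod.fst hij
          have h2 := congrArg Prod.snd hij
          simp only at h1 h2
          rcases lt_trichotomy i j with h | h | h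
          · exact absurd (occ_lt i j h h1) (by omega)
          · exact h
          · exact absurd (occ_lt j i h h1.symm) (by omega))
      have hp : ((Finset.univ.image a) ×ˢ Finset.Icc 1 (L - d)).card = c * (L - d) := by
        rw [Finset.card_product, hcard, Nat.card_Icc]
        have h4 : L - d + 1 - 1 = L - d := by omega
        rw [h4]
      rw [hp] at this
      exact this
    have hS2 : (Finset.univ.filter (fun i : Fin n => ¬ occ i ≤ L - d)).card ≤ d * d := by
      have hIcc : (Finset.Icc (L + 1 - d) L).card = d := by
        rw [Nat.card_Icc]; omega
      have := Finset.card_le_card_of_injOn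
        (s := Finset.univ.filter (fun i : Fin n => ¬ occ i ≤ L - d))
        (f := fun i : Fin n => (x i, y i))
        (t := Finset.Icc (L + 1 - d) L ×ˢ Finset.Icc (L + 1 - d) L)
        (fun i hi => by
          simp only [Finset.mem_coe, Finset.mem_filter, Finset.mem_univ, true_and, not_le] at hi
          have hx' : L + 1 - d ≤ x i :=
            le_trans (by omega) (occ_le_clen a (fun _ _ h => h) i)
          have hy' : L + 1 - d ≤ y i :=
            le_trans (by omega) (occ_le_clen _ (fun p q h => by rw [h]) i)
          simp only [Finset.mem_coe, Finset.mem_product, Finset.mem_Icc]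
          exact ⟨⟨hx', hxL i⟩, ⟨hy', hyL i⟩⟩)
        (fun i _ j _ hij => hinj i j (congrArg Prod.fst hij) (congrArg Prod.snd hij))
      calc (Finset.univ.filter (fun i : Fin n => ¬ occ i ≤ L - d)).card
          ≤ (Finset.Icc (L + 1 - d) L ×ˢ Finset.Icc (L + 1 - d) L).card := this
        _ = d * d := by rw [Finset.card_product, hIcc]
    have hsum : n ≤ c * (L - d) + d * d := by
      have := Finset.card_filter_add_card_filter_not
        (s := (Finset.univ : Finset (Fin n))) (p := fun i => occ i ≤ L - d)
      simp only [Finset.card_univ, Fintype.card_fin] at this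
      omega
    obtain ⟨u, hu⟩ : ∃ u, L = d + u := ⟨L - d, by omega⟩
    have hcd : c = d * d := by rw [hc]; ring
    have hsum' : n ≤ c * u + d * d := by
      rw [hu] at hsum
      have h3 : d + u - d = u := by omega
      rwa [h3] at hsum
    have : k * (d * d) + 1 ≤ (d * d) * u + d * d := by
      calc k * (d * d) + 1 = k * c + 1 := by rw [hcd]
        _ = n := hn.symm
        _ ≤ c * u + d * d := hsum'
        _ = (d * d) * u + d * d := by rw [hcd]
    have hku : k < u + 1 := by
      have h2 : (d * d) * k < (d * d) * (u + 1) := by nlinarith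
      exact Nat.lt_of_mul_lt_mul_left h2
    omega
  -- Step D : extract the subsequence
  obtain ⟨i₀, -, hi₀⟩ := Finset.exists_mem_eq_sup (Finset.univ : Finset (Fin n))
    ⟨⟨0, hn1⟩, Finset.mem_univ _⟩ (fun i : Fin n => max (x i) (y i))
  have hreal : ∀ m : ℕ, d + k ≤ m → (m : ℝ) ≥ Real.sqrt c + (n : ℝ) / c - 2 := by
    intro m hm
    have hcR : (c : ℝ) = (d : ℝ) ^ 2 := by rw [hc]; push_cast; ring
    have hsq : Real.sqrt c = d := by
      rw [hcR, Real.sqrt_sq (by positivity)]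
    have hcpos : (0 : ℝ) < c := by exact_mod_cast hc1
    have hdiv : (n : ℝ) / c ≤ k + 1 := by
      rw [div_le_iff₀ hcpos]
      have : (n : ℝ) = k * c + 1 := by rw [hn]; push_cast; ring
      rw [this]
      nlinarith [hcpos, (by exact_mod_cast hc1 : (1:ℝ) ≤ c)]
    have hm' : (d : ℝ) + k ≤ m := by exact_mod_cast hm
    rw [hsq]
    linarith
  have extract : ∀ (b : Fin n → ℤ) (i : Fin n), ∃ σ : Fin (clen b i) → Fin n,
      StrictMono σ ∧ Monotone (b ∘ σ) := by
    intro b i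
    obtain ⟨s, hs, hsc⟩ := exists_chain b i
    rw [mem_chainSets] at hs
    obtain ⟨-, -, hmono⟩ := hs
    have hsc' : s.card = clen b i := hsc.symm
    refine ⟨fun j => s.orderEmbOfFin hsc' j, (s.orderEmbOfFin hsc').strictMono, ?_⟩
    intro p q hpq
    rcases eq_or_lt_of_le hpq with h | h
    · exact le_of_eq (by rw [h])
    · exact hmono _ (s.orderEmbOfFin_mem hsc' p) _ (s.orderEmbOfFin_mem hsc' q)
        ((s.orderEmbOfFin hsc').strictMono h)
  rcases le_total (y i₀) (x i₀) with hxy | hxy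
  · have hLx : L = x i₀ := (hL.trans hi₀).trans (max_eq_left hxy)
    obtain ⟨σ, hσ, hσm⟩ := extract a i₀
    exact ⟨x i₀, σ, hσ, Or.inl hσm, hreal _ (by omega)⟩
  · have hLy : L = y i₀ := (hL.trans hi₀).trans (max_eq_right hxy)
    obtain ⟨σ, hσ, hσm⟩ := extract (fun i => -a i) i₀
    refine ⟨y i₀, σ, hσ, Or.inr ?_, hreal _ (by omega)⟩
    intro p q hpq
    have h2 : -a (σ p) ≤ -a (σ q) := hσm hpq
    show a (σ q) ≤ a (σ p)
    omega
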